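/- Let μ ≥ 0, let z be a Gaussian random variable with mean μ and variance 1, and let z' := max(z, 0). Then for every positive integer k, |E[z'^k] − E[z^k]| ≤ e^{−μ²/2} · (k−1)!!, where (k−1)!! denotes the double factorial of k−1. -/

import Mathlib

open MeasureTheory ProbabilityTheory Nat Real Filter





lemma integrable_pow_gauss (n : ℕ) :
    Integrable (fun x : ℝ => x ^ n * Real.exp (-x ^ 2 / 2)) := by
  have h := integrable_rpow_mul_exp_neg_mul_sq (b := (1:ℝ)/2) (by norm_num) (s := (n : ℝ))
    (by have : (0:ℝ) ≤ n := Nat.cast_nonneg n; linarith)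
  refine h.congr (Eventually.of_forall fun x => ?_)
  show x ^ ((n:ℝ)) * rexp (-(1/2) * x^2) = _
  rw [Real.rpow_natCast, show -(1/2 : ℝ)*x^2 = -x^2/2 by ring]

lemma integral_gaussianReal_eq (μ : ℝ) (f : ℝ → ℝ) :
    ∫ x, f x ∂(gaussianReal μ 1) = ∫ x, gaussianPDFReal μ 1 x * f x := by
  rw [gaussianReal_of_var_ne_zero μ one_ne_zero]
  have h : (gaussianPDF μ 1) = fun x => (((gaussianPDFReal μ 1 x).toNNReal : NNReal) : ENNReal) := rfl
  rw [h, integral_withDensity_eq_integral_smul ((measurable_gaussianPDFReal μ 1).real_toNNReal) f]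
  congr 1; funext x
  rw [NNReal.smul_def, smul_eq_mul, Real.coe_toNNReal _ (gaussianPDFReal_nonneg μ 1 x)]

lemma pdf_one_eq (μ : ℝ) (x : ℝ) :
    gaussianPDFReal μ 1 x = (Real.sqrt (2*π))⁻¹ * Real.exp (-(x-μ)^2/2) := by
  simp [gaussianPDFReal]

lemma integrable_pdf_mul_pow (μ : ℝ) (n : ℕ) :
    Integrable (fun x => gaussianPDFReal μ 1 x * x ^ n) := by
  have H : Integrable (fun y : ℝ => gaussianPDFReal μ 1 (y + μ) * (y + μ) ^ n) := by
    have he : (fun y : ℝ => gaussianPDFReal μ 1 (y + μ) * (y + μ) ^ n)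
        = fun y => ∑ i ∈ Finset.range (n+1),
            ((Real.sqrt (2*π))⁻¹ * (μ ^ (n - i) * (n.choose i))) * (y ^ i * Real.exp (-y^2/2)) := by
      funext y
      rw [pdf_one_eq, add_pow, Finset.mul_sum, Finset.sum_congr rfl]
      intro i _
      rw [show y + μ - μ = y by ring]
      ring
    rw [he]
    exact integrable_finset_sum _ fun i _ => (integrable_pow_gauss i).const_mul _
  have := H.comp_sub_right μ
  simpa using this


lemma gamma_df_bound : ∀ n : ℕ,
    (2:ℝ) ^ (((n:ℝ)+1)/2) * Real.Gamma (((n:ℝ)+1)/2)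
      ≤ Real.sqrt (2*π) * (Nat.doubleFactorial (n-1) : ℝ) := by
  intro n
  induction n using Nat.twoStepInduction with
  | zero =>
    simp only [Nat.cast_zero, zero_add, Nat.zero_sub, Nat.doubleFactorial, Nat.cast_one, mul_one]
    rw [show ((1:ℝ))/2 = 1/2 by norm_num, Real.Gamma_one_half_eq,
      ← Real.sqrt_eq_rpow, Real.sqrt_mul (by norm_num)]
  | one =>
    simp only [Nat.cast_one]
    rw [show ((1:ℝ)+1)/2 = 1 by norm_num, Real.Gamma_one, Real.rpow_one, mul_one]
    have h4 : (2:ℝ) = Real.sqrt 4 := by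
      rw [show (4:ℝ) = 2^2 by norm_num, Real.sqrt_sq (by norm_num)]
    have hpi : (4:ℝ) ≤ 2*π := by nlinarith [Real.pi_gt_three]
    calc (2:ℝ) = Real.sqrt 4 := h4
      _ ≤ Real.sqrt (2*π) := Real.sqrt_le_sqrt hpi
      _ = Real.sqrt (2*π) * ((Nat.doubleFactorial (1-1):ℕ):ℝ) := by norm_num [Nat.doubleFactorial]
  | more n ih _ =>
    have hpos : (0:ℝ) < ((n:ℝ)+1)/2 := by positivity
    have hg : Real.Gamma (((n:ℝ)+2+1)/2) = (((n:ℝ)+1)/2) * Real.Gamma (((n:ℝ)+1)/2) := by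
      rw [show ((n:ℝ)+2+1)/2 = ((n:ℝ)+1)/2 + 1 by ring, Real.Gamma_add_one hpos.ne']
    have hp : (2:ℝ) ^ (((n:ℝ)+2+1)/2) = 2 * (2:ℝ) ^ (((n:ℝ)+1)/2) := by
      rw [show ((n:ℝ)+2+1)/2 = ((n:ℝ)+1)/2 + 1 by ring, Real.rpow_add (by norm_num),
        Real.rpow_one]; ring
    have hdf : ((Nat.doubleFactorial (n+1) : ℕ) : ℝ)
        = ((n:ℝ)+1) * (Nat.doubleFactorial (n-1) : ℝ) := by
      rw [Nat.doubleFactorial_add_one]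
      push_cast; ring
    have key : (2:ℝ) ^ (((n:ℝ)+2+1)/2) * Real.Gamma (((n:ℝ)+2+1)/2)
        = ((n:ℝ)+1) * ((2:ℝ) ^ (((n:ℝ)+1)/2) * Real.Gamma (((n:ℝ)+1)/2)) := by
      rw [hg, hp]; ring
    push_cast
    rw [key, hdf]
    have h1 : (0:ℝ) ≤ (n:ℝ)+1 := by positivity
    calc ((n:ℝ)+1) * ((2:ℝ) ^ (((n:ℝ)+1)/2) * Real.Gamma (((n:ℝ)+1)/2))
        ≤ ((n:ℝ)+1) * (Real.sqrt (2*π) * (Nat.doubleFactorial (n-1) : ℝ)) := by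
          exact mul_le_mul_of_nonneg_left ih h1
      _ = Real.sqrt (2*π) * (((n:ℝ)+1) * (Nat.doubleFactorial (n-1) : ℝ)) := by ring






lemma moment_bound (k : ℕ) :
    ∫ x, gaussianPDFReal 0 1 x * |x| ^ k ≤ (Nat.doubleFactorial (k-1) : ℝ) := by
  have hc : (0:ℝ) < Real.sqrt (2*π) := by positivity
  set c := (Real.sqrt (2*π))⁻¹ with hcdef
  have hc0 : 0 < c := by positivity
  have heq : (fun x : ℝ => gaussianPDFReal 0 1 x * |x| ^ k)
      = fun x => (fun t => c * Real.exp (-t^2/2) * t ^ k) |x| := by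
    funext x
    rw [pdf_one_eq]
    simp only [sub_zero, sq_abs]
    rfl
  rw [heq]
  have hca := integral_comp_abs (f := fun t => c * Real.exp (-t^2/2) * t ^ k)
  rw [hca]
  have h3 := integral_rpow_mul_exp_neg_mul_rpow (p := 2) (q := (k:ℝ)) (b := 1/2)
    (by norm_num) (by have : (0:ℝ) ≤ k := Nat.cast_nonneg k; linarith) (by norm_num)
  have h2 : ∫ x in Set.Ioi (0:ℝ), c * Real.exp (-x^2/2) * x ^ k
      = c * ((1/2:ℝ) ^ (-((k:ℝ) + 1) / 2) * (1 / 2) * Real.Gamma (((k:ℝ) + 1) / 2)) := by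
    rw [← h3, ← integral_const_mul]
    refine setIntegral_congr_fun measurableSet_Ioi fun x hx => ?_
    rw [show ((2:ℝ)) = ((2:ℕ):ℝ) by norm_num, Real.rpow_natCast, Real.rpow_natCast]
    push_cast
    rw [show -(1/2:ℝ) * x^2 = -x^2/2 by ring]
    ring
  rw [h2]
  have hhalf : (1/2:ℝ) ^ (-((k:ℝ) + 1) / 2) = (2:ℝ) ^ (((k:ℝ)+1)/2) := by
    rw [one_div, Real.inv_rpow (by norm_num), neg_div, Real.rpow_neg (by norm_num), inv_inv]
  rw [hhalf]
  have hgb := gamma_df_bound k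
  calc 2 * (c * ((2:ℝ) ^ (((k:ℝ)+1)/2) * (1/2) * Real.Gamma (((k:ℝ)+1)/2)))
      = c * ((2:ℝ) ^ (((k:ℝ)+1)/2) * Real.Gamma (((k:ℝ)+1)/2)) := by ring
    _ ≤ c * (Real.sqrt (2*π) * (Nat.doubleFactorial (k-1) : ℝ)) :=
        mul_le_mul_of_nonneg_left hgb hc0.le
    _ = (Nat.doubleFactorial (k-1) : ℝ) := by
        rw [hcdef]; field_simp










lemma ptwise (μ : ℝ) (hμ : 0 ≤ μ) {k : ℕ} (hk : 1 ≤ k) (x : ℝ) :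
    |gaussianPDFReal μ 1 x * max x 0 ^ k - gaussianPDFReal μ 1 x * x ^ k|
      ≤ Real.exp (-(μ^2)/2) * (gaussianPDFReal 0 1 x * |x| ^ k) := by
  have h0 := gaussianPDFReal_nonneg 0 1 x
  rcases le_or_gt 0 x with hx | hx
  · rw [max_eq_left hx, sub_self, abs_zero]
    positivity
  · rw [max_eq_right hx.le, zero_pow (by omega), mul_zero, zero_sub, abs_neg, abs_mul,
      abs_of_nonneg (gaussianPDFReal_nonneg μ 1 x), abs_pow]
    rw [pdf_one_eq, pdf_one_eq]
    have key : Real.exp (-(x-μ)^2/2) ≤ Real.exp (-(μ^2)/2) * Real.exp (-(x-0)^2/2) := by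
      rw [← Real.exp_add]
      apply Real.exp_le_exp.mpr
      nlinarith [mul_nonpos_of_nonneg_of_nonpos hμ hx.le]
    calc (Real.sqrt (2*π))⁻¹ * Real.exp (-(x-μ)^2/2) * |x| ^ k
        ≤ (Real.sqrt (2*π))⁻¹ * (Real.exp (-(μ^2)/2) * Real.exp (-(x-0)^2/2)) * |x| ^ k := by
          have : (0:ℝ) ≤ (Real.sqrt (2*π))⁻¹ := by positivity
          have hp : (0:ℝ) ≤ |x| ^ k := by positivity
          apply mul_le_mul_of_nonneg_right (mul_le_mul_of_nonneg_left key this) hp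
      _ = Real.exp (-(μ^2)/2) * ((Real.sqrt (2*π))⁻¹ * Real.exp (-(x-0)^2/2) * |x| ^ k) := by ring


/-- For μ ≥ 0, z ~ N(μ,1) and z' = max(z,0), for every positive integer k we have
|E[z'^k] − E[z^k]| ≤ e^{−μ²/2} · (k−1)!!. -/
theorem stmt6 (μ : ℝ) (hμ : 0 ≤ μ) (k : ℕ) (hk : 1 ≤ k) :
    |(∫ x, (max x 0) ^ k ∂(gaussianReal μ 1)) - ∫ x, x ^ k ∂(gaussianReal μ 1)| ≤
      Real.exp (-(μ ^ 2) / 2) * (Nat.doubleFactorial (k - 1) : ℝ) := by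
  rw [integral_gaussianReal_eq μ (fun x => (max x 0) ^ k),
    integral_gaussianReal_eq μ (fun x => x ^ k)]
  have hI2 : Integrable (fun x => gaussianPDFReal μ 1 x * x ^ k) := integrable_pdf_mul_pow μ k
  have hcont : Continuous (gaussianPDFReal μ 1) := by
    unfold gaussianPDFReal; fun_prop
  have hI1 : Integrable (fun x => gaussianPDFReal μ 1 x * (max x 0) ^ k) := by
    refine hI2.abs.mono' ((hcont.mul ((continuous_id.max continuous_const).pow k)).aestronglyMeasurable) ?_
    refine Eventually.of_forall fun x => ?_
    have h0 := gaussianPDFReal_nonneg μ 1 x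
    have h0m : (0:ℝ) ≤ max x 0 := le_max_right x 0
    have hmx : max x 0 ≤ |x| := max_le (le_abs_self x) (abs_nonneg x)
    rw [Real.norm_eq_abs, abs_mul, abs_of_nonneg h0, abs_mul, abs_of_nonneg h0, abs_pow, abs_pow,
      abs_of_nonneg h0m]
    exact mul_le_mul_of_nonneg_left (pow_le_pow_left₀ h0m hmx k) h0
  have hIdom : Integrable (fun x => Real.exp (-(μ^2)/2) * (gaussianPDFReal 0 1 x * |x| ^ k)) := by
    have h := (integrable_pdf_mul_pow 0 k).abs.const_mul (Real.exp (-(μ^2)/2))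
    refine h.congr (Eventually.of_forall fun x => ?_)
    show rexp (-μ ^ 2 / 2) * |gaussianPDFReal 0 1 x * x ^ k| = _
    rw [abs_mul, abs_of_nonneg (gaussianPDFReal_nonneg 0 1 x), abs_pow]
  rw [← integral_sub hI1 hI2]
  calc |∫ x, (gaussianPDFReal μ 1 x * max x 0 ^ k - gaussianPDFReal μ 1 x * x ^ k)|
      ≤ ∫ x, |gaussianPDFReal μ 1 x * max x 0 ^ k - gaussianPDFReal μ 1 x * x ^ k| :=
        by
          simpa only [Real.norm_eq_abs] using
            norm_integral_le_integral_norm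
              (fun x => gaussianPDFReal μ 1 x * max x 0 ^ k - gaussianPDFReal μ 1 x * x ^ k)
    _ ≤ ∫ x, Real.exp (-(μ^2)/2) * (gaussianPDFReal 0 1 x * |x| ^ k) :=
        integral_mono (hI1.sub hI2).abs hIdom (ptwise μ hμ hk)
    _ = Real.exp (-(μ^2)/2) * ∫ x, gaussianPDFReal 0 1 x * |x| ^ k := integral_const_mul _ _
    _ ≤ Real.exp (-(μ^2)/2) * (Nat.doubleFactorial (k-1) : ℝ) := by
        exact mul_le_mul_of_nonneg_left (moment_bound k) (Real.exp_pos _).le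
  -- note goal exponent: -(μ^2)/2 matches
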